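/- arXiv:1004.0840 — 4 statements merged into one kernel-verified Lean document; each statement's English description precedes it below -/
import Mathlib

section
/- With A = A_{H(4,3)}, g = (1,2,1,-2,-3,0,1) lies in ker A, and g⁺ = (1,2,1,0,0,0,1) satisfies g⁺ = (1/2)·u1 + (1/2)·u2 where u1=(2,0,2,0,0,0,1) and u2=(0,4,0,0,0,0,1), with A·u1 = A·u2 = A·g⁺; hence g⁺ is not a vertex of conv{u ∈ ℤ^7_{≥0} : A·u = A·g⁺}. -/
theorem stmt_7 :
    let A : Matrix (Fin 3) (Fin 7) ℤ :=
      !![1,1,1,1,1,1,1; 1,2,3,4,0,0,0; 0,0,0,0,1,2,3]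
    let g : Fin 7 → ℤ := ![1,2,1,-2,-3,0,1]
    let gp : Fin 7 → ℤ := ![1,2,1,0,0,0,1]
    let u1 : Fin 7 → ℤ := ![2,0,2,0,0,0,1]
    let u2 : Fin 7 → ℤ := ![0,4,0,0,0,0,1]
    A.mulVec g = 0 ∧
    A.mulVec u1 = A.mulVec gp ∧ A.mulVec u2 = A.mulVec gp ∧
    (∀ i, (gp i : ℝ) = (1/2) * (u1 i : ℝ) + (1/2) * (u2 i : ℝ)) ∧
    (fun i => (gp i : ℝ)) ∉
      Set.extremePoints ℝ (convexHull ℝ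
        {x : Fin 7 → ℝ | ∃ w : Fin 7 → ℤ, (∀ i, 0 ≤ w i) ∧
          A.mulVec w = A.mulVec gp ∧ x = fun i => (w i : ℝ)}) := by
  intro A g gp u1 u2
  have hAg : A.mulVec g = 0 := by
    funext i; fin_cases i <;> simp [A, g, Matrix.mulVec, dotProduct,
      Fin.sum_univ_succ]
  have hAu1 : A.mulVec u1 = A.mulVec gp := by
    funext i; fin_cases i <;> simp [A, u1, gp, Matrix.mulVec, dotProduct,
      Fin.sum_univ_succ]
  have hAu2 : A.mulVec u2 = A.mulVec gp := by
    funext i; fin_cases i <;> simp [A, u2, gp, Matrix.mulVec, dotProduct,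
      Fin.sum_univ_succ]
  have hmid : ∀ i, (gp i : ℝ) = (1/2) * (u1 i : ℝ) + (1/2) * (u2 i : ℝ) := by
    intro i; fin_cases i <;> norm_num [gp, u1, u2]
  refine ⟨hAg, hAu1, hAu2, hmid, ?_⟩
  intro hext
  set S : Set (Fin 7 → ℝ) := {x : Fin 7 → ℝ | ∃ w : Fin 7 → ℤ, (∀ i, 0 ≤ w i) ∧
      A.mulVec w = A.mulVec gp ∧ x = fun i => (w i : ℝ)}
  have hu1 : (fun i => (u1 i : ℝ)) ∈ convexHull ℝ S :=
    subset_convexHull ℝ S ⟨u1, by intro i; fin_cases i <;> norm_num [u1], hAu1, rfl⟩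
  have hu2 : (fun i => (u2 i : ℝ)) ∈ convexHull ℝ S :=
    subset_convexHull ℝ S ⟨u2, by intro i; fin_cases i <;> norm_num [u2], hAu2, rfl⟩
  have hopen : (fun i => (gp i : ℝ)) ∈
      openSegment ℝ (fun i => (u1 i : ℝ)) (fun i => (u2 i : ℝ)) := by
    refine ⟨1/2, 1/2, by norm_num, by norm_num, by norm_num, ?_⟩
    funext i
    simpa [Pi.add_apply, smul_eq_mul] using (hmid i).symm
  have := hext.2 hu1 hu2 hopen
  have h0 := congrFun this 0
  norm_num [u1, gp] at h0
end

section
/- Let A ∈ ℤ^{d×n}, σ ⊆ {1,…,n}, u ∈ ℤ^n with A·u = 0 and u_i = 0 for i ∉ σ. Then the fiber polytope conv{v ∈ ℤ^σ_{≥0} : A_σ·v = A_σ·u_σ⁺}, embedded into ℝ^n by extending by zero, is a face of conv{v ∈ ℤ^n_{≥0} : A·v = A·u⁺}; in particular the segment [u⁺, u⁻] is an edge of the former polytope if and only if it is an edge of the latter. -/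
/-- The linear functional summing coordinates outside σ. -/
private def ellL {n : ℕ} (σ : Finset (Fin n)) : (Fin n → ℝ) →ₗ[ℝ] ℝ where
  toFun x := ∑ i ∈ σᶜ, x i
  map_add' x y := by simp [Finset.sum_add_distrib]
  map_smul' c x := by simp [Finset.mul_sum]

theorem stmt_10 {d n : ℕ} (A : Matrix (Fin d) (Fin n) ℤ) (σ : Finset (Fin n))
    (u : Fin n → ℤ) (hker : A.mulVec u = 0) (hsupp : ∀ i ∉ σ, u i = 0) :
    -- the positive and negative parts of u, as real vectors
    let up : Fin n → ℤ := fun i => max (u i) 0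
    let um : Fin n → ℤ := fun i => max (-(u i)) 0
    -- the fiber polytope of A_σ (embedded into ℝ^n by extending by zero)
    let P : Set (Fin n → ℝ) := convexHull ℝ
      {x : Fin n → ℝ | ∃ w : Fin n → ℤ, (∀ i, 0 ≤ w i) ∧ (∀ i ∉ σ, w i = 0) ∧
        A.mulVec w = A.mulVec up ∧ x = fun i => (w i : ℝ)}
    -- the fiber polytope of A
    let Q : Set (Fin n → ℝ) := convexHull ℝ
      {x : Fin n → ℝ | ∃ w : Fin n → ℤ, (∀ i, 0 ≤ w i) ∧
        A.mulVec w = A.mulVec up ∧ x = fun i => (w i : ℝ)}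
    IsExtreme ℝ Q P ∧
    (IsExtreme ℝ P (segment ℝ (fun i => (up i : ℝ)) (fun i => (um i : ℝ))) ↔
     IsExtreme ℝ Q (segment ℝ (fun i => (up i : ℝ)) (fun i => (um i : ℝ)))) := by
  intro up um P Q
  set SP : Set (Fin n → ℝ) :=
      {x : Fin n → ℝ | ∃ w : Fin n → ℤ, (∀ i, 0 ≤ w i) ∧ (∀ i ∉ σ, w i = 0) ∧
        A.mulVec w = A.mulVec up ∧ x = fun i => (w i : ℝ)} with hSP
  set SQ : Set (Fin n → ℝ) :=
      {x : Fin n → ℝ | ∃ w : Fin n → ℤ, (∀ i, 0 ≤ w i) ∧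
        A.mulVec w = A.mulVec up ∧ x = fun i => (w i : ℝ)} with hSQ
  set L := ellL σ with hL
  -- basic facts about the generating sets
  have hSPQ : SP ⊆ SQ := by
    rintro x ⟨w, h1, h2, h3, h4⟩; exact ⟨w, h1, h3, h4⟩
  have hPQ : P ⊆ Q := convexHull_mono hSPQ
  -- L vanishes on P
  have hLP : ∀ x ∈ P, L x = 0 := by
    intro x hx
    have : P ⊆ {x | L x = 0} := by
      apply convexHull_min
      · rintro y ⟨w, h1, h2, h3, rfl⟩
        simp only [hL, ellL, LinearMap.coe_mk, AddHom.coe_mk, Set.mem_setOf_eq]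
        apply Finset.sum_eq_zero
        intro i hi
        rw [h2 i (Finset.mem_compl.mp hi)]; simp
      · exact convex_hyperplane L.isLinear 0
    exact this hx
  -- L is nonnegative on Q
  have hLQ : ∀ x ∈ Q, 0 ≤ L x := by
    intro x hx
    have : Q ⊆ {x | 0 ≤ L x} := by
      apply convexHull_min
      · rintro y ⟨w, h1, h3, rfl⟩
        simp only [hL, ellL, LinearMap.coe_mk, AddHom.coe_mk, Set.mem_setOf_eq]
        exact Finset.sum_nonneg fun i _ => by exact_mod_cast h1 i
      · exact convex_halfSpace_ge L.isLinear 0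
    exact this hx
  -- key: points of Q with L = 0 lie in P
  have hkey : ∀ x ∈ Q, L x = 0 → x ∈ P := by
    intro x hxQ hx0
    rw [show Q = convexHull ℝ SQ from rfl, convexHull_eq] at hxQ
    obtain ⟨ι, t, w, z, hw0, hw1, hz, hcm⟩ := hxQ
    have hzL : ∀ i ∈ t, 0 ≤ L (z i) := by
      intro i hi
      obtain ⟨v, h1, h3, hzi⟩ := hz i hi
      simp only [hzi, hL, ellL, LinearMap.coe_mk, AddHom.coe_mk]
      exact Finset.sum_nonneg fun j _ => by exact_mod_cast h1 j
    have hLx : ∑ i ∈ t, w i * L (z i) = 0 := by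
      have : L (t.centerMass w z) = ∑ i ∈ t, w i * L (z i) := by
        rw [Finset.centerMass, hw1, inv_one, one_smul, map_sum]
        simp
      rw [hcm, hx0] at this; exact this.symm
    have hterm : ∀ i ∈ t, w i * L (z i) = 0 :=
      (Finset.sum_eq_zero_iff_of_nonneg
        (fun i hi => mul_nonneg (hw0 i hi) (hzL i hi))).mp hLx
    -- each z i with nonzero weight is in SP
    have hzP : ∀ i ∈ t, w i ≠ 0 → z i ∈ SP := by
      intro i hi hwi
      obtain ⟨v, h1, h3, hzi⟩ := hz i hi
      have hLz : L (z i) = 0 := by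
        have := hterm i hi
        rcases mul_eq_zero.mp this with h | h
        · exact absurd h hwi
        · exact h
      refine ⟨v, h1, ?_, h3, hzi⟩
      intro j hj
      have hsum : ∑ k ∈ σᶜ, ((v k : ℝ)) = 0 := by
        simpa [hzi, hL, ellL] using hLz
      have := (Finset.sum_eq_zero_iff_of_nonneg
        (fun k _ => by exact_mod_cast h1 k : ∀ k ∈ σᶜ, (0:ℝ) ≤ (v k : ℝ))).mp hsum
        j (Finset.mem_compl.mpr hj)
      exact_mod_cast this
    -- rebuild x as a center of mass of points of SP
    rw [← hcm, ← Finset.centerMass_filter_ne_zero (z := z)]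
    apply Finset.centerMass_mem_convexHull
    · intro i hi; exact hw0 i (Finset.mem_filter.mp hi).1
    · rw [Finset.sum_filter_ne_zero, hw1]; norm_num
    · intro i hi
      obtain ⟨hit, hwi⟩ := Finset.mem_filter.mp hi
      exact hzP i hit hwi
  -- the main face statement
  have hface : IsExtreme ℝ Q P := by
    constructor
    · exact hPQ
    · intro x1 hx1 x2 hx2 x hxP hxseg
      obtain ⟨a, b, ha, hb, hab, hx⟩ := hxseg
      have hLx : L x = 0 := hLP x hxP
      have hL1 : 0 ≤ L x1 := hLQ x1 hx1
      have hL2 : 0 ≤ L x2 := hLQ x2 hx2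
      have hcomb : a * L x1 + b * L x2 = 0 := by
        have := congrArg L hx
        simpa [map_add, map_smul, smul_eq_mul, hLx] using this
      have h1 : L x1 = 0 := by nlinarith
      have h2 : L x2 = 0 := by nlinarith
      exact hkey x1 hx1 h1
  refine ⟨hface, ?_, ?_⟩
  · intro h; exact hface.trans h
  · intro h
    apply h.mono hPQ
    -- segment [up, um] ⊆ P
    have hup : (fun i => ((up i : ℝ))) ∈ SP := by
      refine ⟨up, fun i => le_max_right _ _, fun i hi => by simp [up, hsupp i hi], rfl, rfl⟩
    have hum : (fun i => ((um i : ℝ))) ∈ SP := by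
      refine ⟨um, fun i => le_max_right _ _, fun i hi => by simp [um, hsupp i hi], ?_, rfl⟩
      have huv : up - um = u := by
        funext i; simp only [Pi.sub_apply, up, um]; omega
      have := congrArg (A.mulVec) huv
      rw [Matrix.mulVec_sub, hker, sub_eq_zero] at this
      exact this.symm
    exact (convex_convexHull ℝ SP).segment_subset (subset_convexHull ℝ SP hup)
      (subset_convexHull ℝ SP hum)
end

section
/- Every element g of the Graver basis of the 1×m matrix D = (1,2,…,m) satisfies ‖g‖₁ ≤ 2m − 1, and this bound is attained for m ≥ 2 (e.g., by vectors encoding primitive homogeneous partition identities of maximal length). -/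
/-- `u` is a Graver basis element of the matrix `A`. -/
def IsGraver {d n : ℕ} (A : Matrix (Fin d) (Fin n) ℤ) (u : Fin n → ℤ) : Prop :=
  u ≠ 0 ∧ A.mulVec u = 0 ∧
    ∀ v : Fin n → ℤ, v ≠ 0 → v ≠ u → A.mulVec v = 0 →
      ¬ ((∀ i, max (v i) 0 ≤ max (u i) 0) ∧ (∀ i, max (-(v i)) 0 ≤ max (-(u i)) 0))


/-- Greedy-ordering invariant. -/
def GoodL (m : ℕ) : ℤ → List ℤ → Prop
  | _, [] => True
  | s, c :: l => c ≠ 0 ∧ |c| ≤ (m : ℤ) ∧ (0 < c → s ≤ 0) ∧ (c < 0 → 1 ≤ s) ∧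
      GoodL m (s + c) l

lemma greedy (m : ℕ) : ∀ (n : ℕ) (M : Multiset ℤ), Multiset.card M = n →
    (∀ x ∈ M, x ≠ 0 ∧ |x| ≤ (m : ℤ)) → ∀ s : ℤ, s + M.sum = 0 →
    ∃ l : List ℤ, (l : Multiset ℤ) = M ∧ GoodL m s l := by
  intro n
  induction n with
  | zero =>
    intro M hM _ s _
    exact ⟨[], by simpa using (Multiset.card_eq_zero.mp hM).symm, trivial⟩
  | succ n ih =>
    intro M hM hx s hs
    have hpick : ∃ c ∈ M, (0 < c → s ≤ 0) ∧ (c < 0 → 1 ≤ s) := by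
      rcases le_or_gt s 0 with hsle | hsgt
      · have hex : ∃ c ∈ M, 0 < c := by
          by_contra hcon
          push_neg at hcon
          have hall : ∀ x ∈ M, x ≤ -1 := by
            intro x hxM
            have h1 := (hx x hxM).1
            have h2 := hcon x hxM
            omega
          have hle := Multiset.sum_le_card_nsmul M (-1) hall
          rw [hM] at hle
          simp only [nsmul_eq_mul] at hle
          have : M.sum = -s := by linarith
          rw [this] at hle
          push_cast at hle
          omega
        obtain ⟨c, hcM, hc⟩ := hex
        exact ⟨c, hcM, fun _ => hsle, fun h => absurd hc (by omega)⟩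
      · have hex : ∃ c ∈ M, c < 0 := by
          by_contra hcon
          push_neg at hcon
          have hall : ∀ x ∈ M, (0:ℤ) ≤ x := fun x hxM => hcon x hxM
          have hle := Multiset.sum_nonneg hall
          have : M.sum = -s := by linarith
          omega
        obtain ⟨c, hcM, hc⟩ := hex
        exact ⟨c, hcM, fun h => absurd hc (by omega), fun _ => hsgt⟩
    obtain ⟨c, hcM, hc1, hc2⟩ := hpick
    obtain ⟨hcne, hcabs⟩ := hx c hcM
    have hMe : c ::ₘ M.erase c = M := Multiset.cons_erase hcM
    have hcard' : Multiset.card (M.erase c) = n := by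
      have := congrArg Multiset.card hMe
      simp only [Multiset.card_cons] at this
      omega
    have hsumM : M.sum = c + (M.erase c).sum := by rw [← hMe]; simp
    obtain ⟨l, hl, hgl⟩ := ih (M.erase c) hcard'
      (fun x hx' => hx x (Multiset.mem_of_le (Multiset.erase_le c M) hx'))
      (s + c) (by linarith)
    refine ⟨c :: l, ?_, hcne, hcabs, hc1, hc2, hgl⟩
    rw [← Multiset.cons_coe, hl, hMe]

lemma goodL_bounds (m : ℕ) : ∀ (l : List ℤ) (s : ℤ), GoodL m s l →
    -(m:ℤ) < s → s ≤ m → ∀ k, k ≤ l.length →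
    -(m:ℤ) < s + (l.take k).sum ∧ s + (l.take k).sum ≤ m := by
  intro l
  induction l with
  | nil => intro s _ h1 h2 k hk; simp at hk; simp [hk, h1, h2]
  | cons c l ih =>
    intro s hg h1 h2 k hk
    obtain ⟨hcne, hcabs, hp, hn, hg'⟩ := hg
    match k with
    | 0 => simpa using ⟨h1, h2⟩
    | k + 1 =>
      have hb : -(m:ℤ) < s + c ∧ s + c ≤ m := by
        rcases lt_trichotomy c 0 with hc | hc | hc
        · have := hn hc
          constructor <;> [skip; skip] <;> (rw [abs_le] at hcabs; omega)
        · exact absurd hc hcne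
        · have := hp hc
          rw [abs_le] at hcabs; omega
      have := ih (s + c) hg' hb.1 hb.2 k (by simpa using hk)
      simpa [add_assoc] using this

lemma goodL_get (m : ℕ) : ∀ (l : List ℤ) (s : ℤ), GoodL m s l →
    ∀ k (h : k < l.length),
    l.get ⟨k, h⟩ ≠ 0 ∧ |l.get ⟨k, h⟩| ≤ (m:ℤ) ∧
    (0 < l.get ⟨k, h⟩ → s + (l.take k).sum ≤ 0) ∧
    (l.get ⟨k, h⟩ < 0 → 1 ≤ s + (l.take k).sum) := by
  intro l
  induction l with
  | nil => intro s _ k h; simp at h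
  | cons c l ih =>
    intro s hg k h
    obtain ⟨hcne, hcabs, hp, hn, hg'⟩ := hg
    match k with
    | 0 => simpa using ⟨hcne, hcabs, hp, hn⟩
    | k + 1 =>
      have := ih (s + c) hg' k (by simpa using h)
      simpa [add_assoc] using this


lemma key (m : ℕ) (M : Multiset ℤ) (hM : ∀ x ∈ M, x ≠ 0 ∧ |x| ≤ (m:ℤ))
    (hsign : ∀ x ∈ M, -x ∉ M) (hsum : M.sum = 0) (hne : M ≠ 0)
    (hprim : ∀ M' : Multiset ℤ, M' ≤ M → M' ≠ 0 → M' ≠ M → M'.sum ≠ 0) :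
    (Multiset.card M : ℤ) ≤ 2 * m - 1 := by
  obtain ⟨x₀, hx₀⟩ := Multiset.exists_mem_of_ne_zero hne
  have hm1 : 1 ≤ m := by
    obtain ⟨h1, h2⟩ := hM x₀ hx₀
    rw [abs_le] at h2
    by_contra h
    have : m = 0 := by omega
    rw [this] at h2
    push_cast at h2
    omega
  obtain ⟨l, hl, hg⟩ := greedy m (Multiset.card M) M rfl hM 0 (by simpa using hsum)
  have hcard : Multiset.card M = l.length := by rw [← hl]; simp
  have hbnd : ∀ k, k ≤ l.length → -(m:ℤ) < (l.take k).sum ∧ (l.take k).sum ≤ m := by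
    intro k hk
    have h0 : -(m:ℤ) < 0 := by push_cast; omega
    have := goodL_bounds m l 0 hg h0 (by positivity) k hk
    simpa using this
  have hSN : (l.take l.length).sum = 0 := by
    rw [List.take_length, ← Multiset.sum_coe, hl, hsum]
  -- no two equal partial sums except (0, length)
  have haux : ∀ i j, i < j → j ≤ l.length → ¬(i = 0 ∧ j = l.length) →
      (l.take i).sum ≠ (l.take j).sum := by
    intro i j hij hjN hnot hSij
    have hsegsub : (((l.drop i).take (j - i) : List ℤ) : Multiset ℤ) ≤ M := by
      rw [← hl]
      exact (((l.drop i).take_sublist (j-i)).trans (l.drop_sublist i)).subperm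
    have hsegperm : l.take j = l.take i ++ (l.drop i).take (j - i) := by
      rw [← List.take_add]
      congr 1
      omega
    have hseglen : ((l.drop i).take (j - i)).length = j - i := by
      simp
      omega
    have hsegsum : ((l.drop i).take (j - i)).sum = 0 := by
      have h := congrArg List.sum hsegperm
      rw [List.sum_append, ← hSij] at h
      linarith
    refine hprim ((l.drop i).take (j - i)) hsegsub ?_ ?_ (by simpa using hsegsum)
    · intro h
      have := congrArg Multiset.card h
      simp only [Multiset.coe_card, hseglen, Multiset.card_zero] at this
      omega
    · intro h
      have := congrArg Multiset.card h
      rw [hcard] at this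
      simp only [Multiset.coe_card, hseglen] at this
      omega
  have hinj : Set.InjOn (fun k => (l.take k).sum) (Finset.range l.length : Set ℕ) := by
    intro i hi j hj hij
    simp only [Finset.coe_range, Set.mem_Iio] at hi hj
    by_contra hne'
    rcases Nat.lt_or_ge i j with h | h
    · exact haux i j h (by omega) (by omega) hij
    · exact haux j i (by omega) (by omega) (by omega) hij.symm
  have hmaps : ∀ k ∈ Finset.range l.length,
      (l.take k).sum ∈ Finset.Icc (1 - (m:ℤ)) m := by
    intro k hk
    simp only [Finset.mem_range] at hk
    have := hbnd k (by omega)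
    rw [Finset.mem_Icc]
    omega
  have hIcc_card : (Finset.Icc (1 - (m:ℤ)) m).card = 2 * m := by
    rw [Int.card_Icc]
    have h : ((m:ℤ) + 1 - (1 - m)) = 2 * m := by ring
    rw [h]
    omega
  have hNle : l.length ≤ 2 * m := by
    have := Finset.card_le_card_of_injOn _ hmaps hinj
    simpa [hIcc_card] using this
  rcases Nat.lt_or_ge l.length (2 * m) with hlt | hge
  · rw [hcard]; push_cast; omega
  exfalso
  have hsurj := Finset.surj_on_of_inj_on_of_card_le (s := Finset.range l.length)
      (t := Finset.Icc (1 - (m:ℤ)) m) (fun a _ => (l.take a).sum)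
      (fun a ha => hmaps a ha)
      (fun a₁ a₂ ha₁ ha₂ h => hinj (by simpa using ha₁) (by simpa using ha₂) h)
      (by rw [hIcc_card, Finset.card_range]; omega)
  -- m is attained, so m ∈ l
  have hmem_m : (m:ℤ) ∈ l := by
    obtain ⟨k, hk, hkS⟩ := hsurj (m:ℤ) (by rw [Finset.mem_Icc]; omega)
    have hkS' : (l.take k).sum = (m:ℤ) := hkS.symm
    simp only [Finset.mem_range] at hk
    have hk0 : k ≠ 0 := by
      intro h
      rw [h] at hkS'
      simp at hkS'
      omega
    obtain ⟨k0, rfl⟩ : ∃ k0, k = k0 + 1 := ⟨k - 1, by omega⟩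
    have hk0N : k0 < l.length := by omega
    have hrec : (l.take (k0 + 1)).sum = (l.take k0).sum + l.get ⟨k0, hk0N⟩ :=
      List.sum_take_succ l k0 hk0N
    obtain ⟨hne0, habs, hpos, hneg⟩ := goodL_get m l 0 hg k0 hk0N
    simp only [zero_add] at hpos hneg
    rcases lt_trichotomy (l.get ⟨k0, hk0N⟩) 0 with hcs | hcs | hcs
    · have := (hbnd k0 (by omega)).2
      omega
    · exact absurd hcs hne0
    · have h1 : (l.take k0).sum ≤ 0 := hpos hcs
      rw [abs_le] at habs
      have hcm : l.get ⟨k0, hk0N⟩ = m := by omega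
      rw [← hcm]
      exact List.get_mem l ⟨k0, hk0N⟩
  have h1M : ((m:ℤ)) ∈ M := by rw [← hl]; exact Multiset.mem_coe.mpr hmem_m
  -- -m ∈ l (m ≥ 2), or direct contradiction (m = 1)
  rcases Nat.lt_or_ge m 2 with hm2 | hm2
  · -- m = 1 : all entries equal 1, impossible since sum = 0 and M ≠ 0
    have hm : m = 1 := by omega
    subst hm
    have hall : ∀ x ∈ M, (1:ℤ) ≤ x := by
      intro x hxM
      obtain ⟨h1, h2⟩ := hM x hxM
      rw [abs_le] at h2
      have hne1 : x ≠ -1 := by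
        intro h
        apply hsign 1 h1M
        rw [← h]
        exact hxM
      push_cast at h2
      omega
    have hle := Multiset.card_nsmul_le_sum hall
    rw [hsum] at hle
    simp only [nsmul_eq_mul, mul_one] at hle
    have : Multiset.card M = 0 := by omega
    exact hne (Multiset.card_eq_zero.mp this)
  · have hmem_nm : -(m:ℤ) ∈ l := by
      obtain ⟨j, hj, hjS⟩ := hsurj (1 - (m:ℤ)) (by rw [Finset.mem_Icc]; omega)
      have hjS' : (l.take j).sum = 1 - (m:ℤ) := hjS.symm
      simp only [Finset.mem_range] at hj
      have hj0 : j ≠ 0 := by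
        intro h
        rw [h] at hjS'
        simp at hjS'
        omega
      obtain ⟨j0, rfl⟩ : ∃ j0, j = j0 + 1 := ⟨j - 1, by omega⟩
      have hj0N : j0 < l.length := by omega
      have hrec : (l.take (j0 + 1)).sum = (l.take j0).sum + l.get ⟨j0, hj0N⟩ :=
        List.sum_take_succ l j0 hj0N
      obtain ⟨hne0, habs, hpos, hneg⟩ := goodL_get m l 0 hg j0 hj0N
      simp only [zero_add] at hpos hneg
      rcases lt_trichotomy (l.get ⟨j0, hj0N⟩) 0 with hcs | hcs | hcs
      · have h1 : 1 ≤ (l.take j0).sum := hneg hcs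
        rw [abs_le] at habs
        have hcm : l.get ⟨j0, hj0N⟩ = -(m:ℤ) := by omega
        rw [← hcm]
        exact List.get_mem l ⟨j0, hj0N⟩
      · exact absurd hcs hne0
      · have h1 : (l.take j0).sum ≤ 0 := hpos hcs
        have := (hbnd j0 (by omega)).1
        omega
    exact hsign (m:ℤ) h1M (by rw [← hl]; exact Multiset.mem_coe.mpr hmem_nm)


lemma msum_counts (s : Multiset ℤ) : s.sum = ∑ a ∈ s.toFinset, (s.count a : ℤ) * a := by
  conv_lhs => rw [← Multiset.toFinset_sum_count_nsmul_eq s]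
  have h : ∀ (t : Finset ℤ) (f : ℤ → Multiset ℤ), (∑ a ∈ t, f a).sum = ∑ a ∈ t, (f a).sum := by
    intro t f
    induction t using Finset.induction with
    | empty => simp
    | insert _ _ h ih => simp [Finset.sum_insert h, ih]
  rw [h]
  congr 1
  funext a
  rw [Multiset.nsmul_singleton, Multiset.sum_replicate, nsmul_eq_mul, mul_comm]

lemma graver_bound {m : ℕ} (D : Matrix (Fin 1) (Fin m) ℤ)
    (hD : ∀ r j, D r j = (j : ℤ) + 1) (g : Fin m → ℤ) (hg : IsGraver D g) :
    ∑ i, |g i| ≤ 2 * (m : ℤ) - 1 := by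
  classical
  obtain ⟨hg0, hgker, hgprim⟩ := hg
  set w : Fin m → ℤ := fun i => Int.sign (g i) * ((i:ℤ) + 1) with hwdef
  set M : Multiset ℤ := ∑ i : Fin m, Multiset.replicate (g i).natAbs (w i) with hMdef
  -- basic facts about w
  have hipos : ∀ i : Fin m, (0:ℤ) < (i:ℤ) + 1 := by
    intro i; have := i.is_lt; omega
  have hw0 : ∀ i, g i = 0 → w i = 0 := by
    intro i h; simp [hwdef, h]
  have habsw : ∀ i, g i ≠ 0 → |w i| = (i:ℤ) + 1 := by
    intro i h
    rw [hwdef]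
    simp only []
    rw [abs_mul, abs_of_pos (hipos i)]
    rcases lt_trichotomy (g i) 0 with hc | hc | hc
    · rw [Int.sign_eq_neg_one_of_neg hc]; norm_num
    · exact absurd hc h
    · rw [Int.sign_eq_one_of_pos hc]; norm_num
  have hwne : ∀ i, g i ≠ 0 → w i ≠ 0 := by
    intro i h hc
    have := habsw i h
    rw [hc] at this
    simp at this
    have := hipos i
    omega
  have hwinj : ∀ i j, g i ≠ 0 → g j ≠ 0 → w i = w j → i = j := by
    intro i j hi hj hij
    have h1 := habsw i hi
    have h2 := habsw j hj
    rw [hij, h2] at h1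
    have : (i:ℕ) = (j:ℕ) := by omega
    exact Fin.ext this
  -- membership
  have hmemM : ∀ x, x ∈ M ↔ ∃ i, g i ≠ 0 ∧ x = w i := by
    intro x
    rw [hMdef, Multiset.mem_sum]
    constructor
    · rintro ⟨i, -, hx⟩
      rw [Multiset.mem_replicate] at hx
      exact ⟨i, by simpa [Int.natAbs_ne_zero] using hx.1, hx.2⟩
    · rintro ⟨i, hi, rfl⟩
      exact ⟨i, Finset.mem_univ i, Multiset.mem_replicate.mpr ⟨by simpa [Int.natAbs_ne_zero] using hi, rfl⟩⟩
  -- counts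
  have hcountM : ∀ i, M.count (w i) = (g i).natAbs := by
    intro i
    rw [hMdef, Multiset.count_sum']
    rw [Finset.sum_eq_single i]
    · rw [Multiset.count_replicate, if_pos rfl]
    · intro j _ hji
      rw [Multiset.count_replicate]
      split_ifs with h
      · by_cases hgj : g j = 0
        · simpa using hgj
        · by_cases hgi : g i = 0
          · exact absurd (h.trans (hw0 i hgi)) (hwne j hgj)
          · exact absurd (hwinj j i hgj hgi h) hji
      · rfl
    · intro h; exact absurd (Finset.mem_univ i) h
  -- card
  have hcardM : (Multiset.card M : ℤ) = ∑ i, |g i| := by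
    rw [hMdef]
    have h : ∀ (t : Finset (Fin m)) (f : Fin m → Multiset ℤ),
        Multiset.card (∑ a ∈ t, f a) = ∑ a ∈ t, Multiset.card (f a) := by
      intro t f
      induction t using Finset.induction with
      | empty => simp
      | insert _ _ h ih => simp [Finset.sum_insert h, ih]
    rw [h]
    push_cast [Multiset.card_replicate, Int.natCast_natAbs]
    rfl
  -- kernel equation for g
  have hker0 : ∑ j : Fin m, ((j:ℤ) + 1) * g j = 0 := by
    have := congrFun hgker 0
    simpa [Matrix.mulVec, dotProduct, hD] using this
  -- sum of M
  have hsumM : M.sum = 0 := by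
    rw [hMdef]
    have h : ∀ (t : Finset (Fin m)) (f : Fin m → Multiset ℤ),
        (∑ a ∈ t, f a).sum = ∑ a ∈ t, (f a).sum := by
      intro t f
      induction t using Finset.induction with
      | empty => simp
      | insert _ _ h ih => simp [Finset.sum_insert h, ih]
    rw [h]
    rw [← hker0]
    congr 1
    funext i
    rw [Multiset.sum_replicate, nsmul_eq_mul, Int.natCast_natAbs, hwdef]
    simp only []
    rw [show |g i| * (Int.sign (g i) * ((i:ℤ)+1)) = (Int.sign (g i) * |g i|) * ((i:ℤ)+1) by ring,
      Int.sign_mul_abs, mul_comm]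
  have hMprops : ∀ x ∈ M, x ≠ 0 ∧ |x| ≤ (m:ℤ) := by
    intro x hx
    obtain ⟨i, hi, rfl⟩ := (hmemM x).mp hx
    refine ⟨hwne i hi, ?_⟩
    rw [habsw i hi]
    have := i.is_lt
    omega
  have hMsign : ∀ x ∈ M, -x ∉ M := by
    intro x hx hnx
    obtain ⟨i, hi, hxi⟩ := (hmemM x).mp hx
    obtain ⟨j, hj, hxj⟩ := (hmemM (-x)).mp hnx
    have habs : |w i| = |w j| := by rw [← hxi, ← hxj, abs_neg]
    rw [habsw i hi, habsw j hj] at habs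
    have hij : i = j := Fin.ext (by omega)
    rw [hij] at hxi
    have : x = 0 := by rw [hxi] at hxj ⊢; omega
    exact (hMprops x hx).1 this
  have hMne : M ≠ 0 := by
    have : ∃ i, g i ≠ 0 := by
      by_contra h
      push_neg at h
      exact hg0 (funext h)
    obtain ⟨i, hi⟩ := this
    intro h
    have : w i ∈ M := (hmemM (w i)).mpr ⟨i, hi, rfl⟩
    rw [h] at this
    exact absurd this (Multiset.notMem_zero _)
  -- primitivity
  have hMprim : ∀ M' : Multiset ℤ, M' ≤ M → M' ≠ 0 → M' ≠ M → M'.sum ≠ 0 := by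
    intro M' hle hne' hneM hsum0
    set v : Fin m → ℤ := fun i => Int.sign (g i) * (M'.count (w i) : ℤ) with hvdef
    have hcnt_le : ∀ i, M'.count (w i) ≤ (g i).natAbs := by
      intro i
      rw [← hcountM i]
      exact Multiset.count_le_of_le _ hle
    have hcnt0 : ∀ i, g i = 0 → M'.count (w i) = 0 := by
      intro i h
      have := hcnt_le i
      rw [h] at this
      simpa using this
    have hv0 : v ≠ 0 := by
      obtain ⟨x, hx⟩ := Multiset.exists_mem_of_ne_zero hne'
      obtain ⟨i, hi, rfl⟩ := (hmemM x).mp (Multiset.mem_of_le hle hx)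
      intro h
      have hvi : Int.sign (g i) * (M'.count (w i) : ℤ) = 0 := congrFun h i
      rcases mul_eq_zero.mp hvi with h' | h'
      · exact hi (Int.sign_eq_zero_iff_zero.mp h')
      · have := Multiset.count_pos.mpr hx
        omega
    have hvg : v ≠ g := by
      intro h
      apply hneM
      refine le_antisymm hle (Multiset.le_iff_count.mpr fun a => ?_)
      by_cases ha : a ∈ M
      · obtain ⟨i, hi, rfl⟩ := (hmemM a).mp ha
        rw [hcountM i]
        have hvi : Int.sign (g i) * (M'.count (w i) : ℤ) = g i := congrFun h i
        rcases lt_trichotomy (g i) 0 with hc | hc | hc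
        · rw [Int.sign_eq_neg_one_of_neg hc] at hvi
          omega
        · exact absurd hc hi
        · rw [Int.sign_eq_one_of_pos hc] at hvi
          omega
      · rw [Multiset.count_eq_zero_of_notMem ha]
        exact Nat.zero_le _
    have hvker : D.mulVec v = 0 := by
      funext r
      have hr : r = 0 := Subsingleton.elim r 0
      rw [hr]
      show ∑ j, D 0 j * v j = 0
      have h1 : ∑ j, D 0 j * v j = ∑ i : Fin m, (M'.count (w i) : ℤ) * w i := by
        congr 1
        funext i
        rw [hD, hvdef, hwdef]
        ring
      have h2 : ∑ i ∈ Finset.univ.filter (fun i => w i ∈ M'), (M'.count (w i) : ℤ) * w i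
          = ∑ i : Fin m, (M'.count (w i) : ℤ) * w i := by
        apply Finset.sum_filter_of_ne
        intro i _ hne''
        by_contra hcm
        rw [Multiset.count_eq_zero_of_notMem hcm] at hne''
        simp at hne''
      have h3 : ∑ i ∈ Finset.univ.filter (fun i => w i ∈ M'), (M'.count (w i) : ℤ) * w i
          = ∑ a ∈ M'.toFinset, (M'.count a : ℤ) * a := by
        refine Finset.sum_bij (fun i _ => w i) ?_ ?_ ?_ ?_
        · intro i hi
          rw [Finset.mem_filter] at hi
          exact Multiset.mem_toFinset.mpr hi.2
        · intro i₁ hi₁ i₂ hi₂ hww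
          rw [Finset.mem_filter] at hi₁ hi₂
          have h₁ : g i₁ ≠ 0 := by
            intro hz
            have := (hMprops (w i₁) (Multiset.mem_of_le hle hi₁.2)).1
            exact this (hw0 i₁ hz)
          have h₂ : g i₂ ≠ 0 := by
            intro hz
            have := (hMprops (w i₂) (Multiset.mem_of_le hle hi₂.2)).1
            exact this (hw0 i₂ hz)
          exact hwinj i₁ i₂ h₁ h₂ hww
        · intro a ha
          rw [Multiset.mem_toFinset] at ha
          obtain ⟨i, hi, rfl⟩ := (hmemM a).mp (Multiset.mem_of_le hle ha)
          exact ⟨i, Finset.mem_filter.mpr ⟨Finset.mem_univ i, ha⟩, rfl⟩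
        · intro i _
          rfl
      rw [h1, ← h2, h3, ← msum_counts, hsum0]
    have hdom : (∀ i, max (v i) 0 ≤ max (g i) 0) ∧ (∀ i, max (-(v i)) 0 ≤ max (-(g i)) 0) := by
      have key : ∀ i, max (v i) 0 ≤ max (g i) 0 ∧ max (-(v i)) 0 ≤ max (-(g i)) 0 := by
        intro i
        have hc := hcnt_le i
        have hvi : v i = Int.sign (g i) * (M'.count (w i) : ℤ) := rfl
        rcases lt_trichotomy (g i) 0 with h | h | h
        · rw [Int.sign_eq_neg_one_of_neg h] at hvi
          omega
        · have hz := hcnt0 i h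
          rw [hz] at hvi
          simp at hvi
          omega
        · rw [Int.sign_eq_one_of_pos h] at hvi
          omega
      exact ⟨fun i => (key i).1, fun i => (key i).2⟩
    exact hgprim v hv0 hvg hvker hdom
  have := key m M hMprops hMsign hsumM hMne hMprim
  omega

lemma graver_example {m : ℕ} (hm : 2 ≤ m) (D : Matrix (Fin 1) (Fin m) ℤ)
    (hD : ∀ r j, D r j = (j : ℤ) + 1) :
    ∃ g : Fin m → ℤ, IsGraver D g ∧ ∑ i, |g i| = 2 * (m : ℤ) - 1 := by
  classical
  have hm2 : m - 2 < m := by omega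
  have hm1 : m - 1 < m := by omega
  set a : Fin m := ⟨m - 2, hm2⟩ with hadef
  set b : Fin m := ⟨m - 1, hm1⟩ with hbdef
  have hab : a ≠ b := by
    rw [hadef, hbdef, Fin.ne_iff_vne]
    simp
    omega
  have hca : ((a:ℕ):ℤ) + 1 = (m:ℤ) - 1 := by
    rw [hadef]
    simp
    omega
  have hcb : ((b:ℕ):ℤ) + 1 = (m:ℤ) := by
    rw [hbdef]
    simp
    omega
  set g : Fin m → ℤ := fun i => if i = a then (m:ℤ) else if i = b then -((m:ℤ)-1) else 0
    with hgdef
  have hga : g a = m := by simp [hgdef]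
  have hgb : g b = -((m:ℤ)-1) := by simp [hgdef, hab.symm]
  have hgo : ∀ i, i ≠ a → i ≠ b → g i = 0 := by
    intro i h1 h2; simp [hgdef, h1, h2]
  have hpair : ∀ F : Fin m → ℤ, (∀ i, i ≠ a → i ≠ b → F i = 0) → ∑ i, F i = F a + F b := by
    intro F hF
    rw [← Finset.sum_subset (Finset.subset_univ {a, b})]
    · exact Finset.sum_pair hab
    · intro x _ hx
      simp only [Finset.mem_insert, Finset.mem_singleton, not_or] at hx
      exact hF x hx.1 hx.2
  have hmveq : ∀ v : Fin m → ℤ, D.mulVec v = 0 ↔ ∑ j : Fin m, (((j:ℕ):ℤ) * v j + v j) = 0 := by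
    intro v
    constructor
    · intro h
      have := congrFun h 0
      simpa [Matrix.mulVec, dotProduct, hD, add_mul, one_mul] using this
    · intro h
      funext r
      have hr : r = 0 := Subsingleton.elim r 0
      rw [hr]
      show ∑ j, D 0 j * v j = 0
      rw [← h]
      congr 1
      funext j
      rw [hD]
      ring
  refine ⟨g, ⟨?_, ?_, ?_⟩, ?_⟩
  · -- g ≠ 0
    intro h
    have : g a = 0 := congrFun h a
    rw [hga] at this
    omega
  · -- kernel
    rw [hmveq]
    calc ∑ j : Fin m, (((j:ℕ):ℤ) * g j + g j) = ∑ j : Fin m, (((j:ℕ):ℤ) + 1) * g j := by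
          congr 1; funext j; ring
      _ = (((a:ℕ):ℤ) + 1) * g a + (((b:ℕ):ℤ) + 1) * g b := by
          apply hpair
          intro i h1 h2
          rw [hgo i h1 h2]
          ring
      _ = 0 := by rw [hca, hcb, hga, hgb]; ring
  · -- primitivity
    intro v hv0 hvg hvker ⟨hd1, hd2⟩
    have hvo : ∀ i, i ≠ a → i ≠ b → v i = 0 := by
      intro i h1 h2
      have h3 := hd1 i
      have h4 := hd2 i
      rw [hgo i h1 h2] at h3 h4
      omega
    have hva : 0 ≤ v a ∧ v a ≤ m := by
      have h3 := hd1 a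
      have h4 := hd2 a
      rw [hga] at h3 h4
      constructor <;> omega
    have hvb : v b ≤ 0 ∧ -((m:ℤ)-1) ≤ v b := by
      have h3 := hd1 b
      have h4 := hd2 b
      rw [hgb] at h3 h4
      constructor <;> omega
    have hkerv : ((m:ℤ) - 1) * v a + (m:ℤ) * v b = 0 := by
      rw [hmveq] at hvker
      rw [show ∑ j : Fin m, (((j:ℕ):ℤ) * v j + v j) = (((a:ℕ):ℤ) + 1) * v a + (((b:ℕ):ℤ) + 1) * v b from by
        rw [← hpair (fun j => (((j:ℕ):ℤ) + 1) * v j) (fun i h1 h2 => by show (((i:ℕ):ℤ) + 1) * v i = 0; rw [hvo i h1 h2]; ring)]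
        congr 1; funext j; ring] at hvker
      rw [hca, hcb] at hvker
      linarith
    -- m ∣ v a
    have hdvd : (m:ℤ) ∣ v a := by
      have : v a = (m:ℤ) * (v a + v b) := by linarith
      exact ⟨v a + v b, this⟩
    obtain ⟨k, hk⟩ := hdvd
    have hm0 : (2:ℤ) ≤ m := by exact_mod_cast hm
    have hk01 : k = 0 ∨ k = 1 := by
      rcases le_or_gt k (-1) with h | h
      · exfalso
        have : (m:ℤ) * k ≤ (m:ℤ) * (-1) := by
          apply mul_le_mul_of_nonneg_left h
          omega
        omega
      rcases le_or_gt 2 k with h2 | h2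
      · exfalso
        have : (m:ℤ) * 2 ≤ (m:ℤ) * k := by
          apply mul_le_mul_of_nonneg_left h2
          omega
        omega
      · omega
    rcases hk01 with h | h
    · -- v = 0
      apply hv0
      have hva0 : v a = 0 := by rw [hk, h]; ring
      have hvb0 : v b = 0 := by
        have : (m:ℤ) * v b = 0 := by rw [← hkerv, hva0]; ring
        rcases mul_eq_zero.mp this with h' | h'
        · omega
        · exact h'
      funext i
      by_cases h1 : i = a
      · rw [h1, hva0]; rfl
      by_cases h2 : i = b
      · rw [h2, hvb0]; rfl
      · rw [hvo i h1 h2]; rfl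
    · -- v = g
      apply hvg
      have hvam : v a = m := by rw [hk, h]; ring
      have hvbm : v b = -((m:ℤ)-1) := by
        have h' : (m:ℤ) * v b = (m:ℤ) * (-((m:ℤ)-1)) := by rw [← sub_eq_zero]; rw [hvam] at hkerv; ring_nf; linarith
        have := mul_left_cancel₀ (by omega : (m:ℤ) ≠ 0) h'
        exact this
      funext i
      by_cases h1 : i = a
      · rw [h1, hvam, hga]
      by_cases h2 : i = b
      · rw [h2, hvbm, hgb]
      · rw [hvo i h1 h2, hgo i h1 h2]
  · -- the norm
    have : ∑ i, |g i| = |g a| + |g b| := by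
      apply hpair
      intro i h1 h2
      rw [hgo i h1 h2]
      simp
    rw [this, hga, hgb]
    have hm0 : (2:ℤ) ≤ m := by exact_mod_cast hm
    rw [abs_of_nonneg (by omega : (0:ℤ) ≤ m), abs_of_nonpos (by omega : -((m:ℤ)-1) ≤ 0)]
    ring

theorem stmt_12 {m : ℕ} (D : Matrix (Fin 1) (Fin m) ℤ)
    (hD : ∀ r j, D r j = (j : ℤ) + 1) :
    (∀ g : Fin m → ℤ, IsGraver D g → ∑ i, |g i| ≤ 2 * (m : ℤ) - 1) ∧
    (2 ≤ m → ∃ g : Fin m → ℤ, IsGraver D g ∧ ∑ i, |g i| = 2 * (m : ℤ) - 1) := by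
  exact ⟨fun g hg => graver_bound D hD g hg, fun hm => graver_example hm D hD⟩
end

section
/- The vector g = (1,-1,1,-1,-1,0,1) gives a Graver basis element of A_{S(6)} = [[1,2,3,4,5,6,7],[1,1,1,1,1,1,1]] that is not in the universal Gröbner basis: g is primitive in ker A_{S(6)}, but the segment [g⁺, g⁻] is not an edge of the fiber polytope conv{u ∈ ℤ^7_{≥0} : A·u = A·g⁺}. -/
private lemma cv5 {α : Type*} (a b c d e f g : α) : ![a,b,c,d,e,f,g] 5 = f := rfl

private lemma cv6 {α : Type*} (a b c d e f g : α) : ![a,b,c,d,e,f,g] 6 = g := rfl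

private lemma bnd1 {x c : ℤ} (hc : 0 ≤ c) (h : max x 0 ≤ max c 0) : x ≤ c := by omega

private lemma bnd2 {x c : ℤ} (hc : c ≤ 0) (h : max x 0 ≤ max c 0) : x ≤ 0 := by omega

theorem stmt_16 :
    let A : Matrix (Fin 2) (Fin 7) ℤ := !![1,2,3,4,5,6,7; 1,1,1,1,1,1,1]
    let g : Fin 7 → ℤ := ![1,-1,1,-1,-1,0,1]
    let gp : Fin 7 → ℝ := ![1,0,1,0,0,0,1]
    let gm : Fin 7 → ℝ := ![0,1,0,1,1,0,0]
    IsGraver A g ∧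
    ¬ IsExtreme ℝ
        (convexHull ℝ {x : Fin 7 → ℝ | ∃ w : Fin 7 → ℤ, (∀ i, 0 ≤ w i) ∧
          A.mulVec w = A.mulVec ![1,0,1,0,0,0,1] ∧ x = fun i => (w i : ℝ)})
        (segment ℝ gp gm) := by
  intro A g gp gm
  constructor
  · refine ⟨?_, ?_, ?_⟩
    · intro h
      have := congrFun h 0
      simp [g] at this
    · funext i; fin_cases i <;> decide
    · rintro v hv0 hvg hker ⟨hp, hm⟩
      have hp0 := hp 0; have hp1 := hp 1; have hp2 := hp 2; have hp3 := hp 3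
      have hp4 := hp 4; have hp5 := hp 5; have hp6 := hp 6
      have hm0 := hm 0; have hm1 := hm 1; have hm2 := hm 2; have hm3 := hm 3
      have hm4 := hm 4; have hm5 := hm 5; have hm6 := hm 6
      rw [show g 0 = 1 from rfl] at hp0 hm0
      rw [show g 1 = -1 from rfl] at hp1 hm1
      rw [show g 2 = 1 from rfl] at hp2 hm2
      rw [show g 3 = -1 from rfl] at hp3 hm3
      rw [show g 4 = -1 from rfl] at hp4 hm4
      rw [show g 5 = 0 from rfl] at hp5 hm5
      rw [show g 6 = 1 from rfl] at hp6 hm6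
      have b0p : v 0 ≤ 1 := bnd1 (by norm_num) hp0
      have b1p : v 1 ≤ 0 := bnd2 (by norm_num) hp1
      have b2p : v 2 ≤ 1 := bnd1 (by norm_num) hp2
      have b3p : v 3 ≤ 0 := bnd2 (by norm_num) hp3
      have b4p : v 4 ≤ 0 := bnd2 (by norm_num) hp4
      have b5p : v 5 ≤ 0 := bnd2 (by norm_num) hp5
      have b6p : v 6 ≤ 1 := bnd1 (by norm_num) hp6
      have b0m : -v 0 ≤ 0 := bnd2 (by norm_num) hm0
      have b1m : -v 1 ≤ 1 := by have := bnd1 (by norm_num : (0:ℤ) ≤ -(-1)) hm1; omega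
      have b2m : -v 2 ≤ 0 := bnd2 (by norm_num) hm2
      have b3m : -v 3 ≤ 1 := by have := bnd1 (by norm_num : (0:ℤ) ≤ -(-1)) hm3; omega
      have b4m : -v 4 ≤ 1 := by have := bnd1 (by norm_num : (0:ℤ) ≤ -(-1)) hm4; omega
      have b5m : -v 5 ≤ 0 := bnd2 (by norm_num) hm5
      have b6m : -v 6 ≤ 0 := bnd2 (by norm_num) hm6
      have e1 := congrFun hker 0
      have e2 := congrFun hker 1
      simp [A, Matrix.mulVec, dotProduct, Fin.sum_univ_seven] at e1 e2
      have key : (v 0 = 0 ∧ v 1 = 0 ∧ v 2 = 0 ∧ v 3 = 0 ∧ v 4 = 0 ∧ v 5 = 0 ∧ v 6 = 0) ∨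
          (v 0 = 1 ∧ v 1 = -1 ∧ v 2 = 1 ∧ v 3 = -1 ∧ v 4 = -1 ∧ v 5 = 0 ∧ v 6 = 1) := by
        clear hker hv0 hvg hp hm hp0 hp1 hp2 hp3 hp4 hp5 hp6 hm0 hm1 hm2 hm3 hm4 hm5 hm6
        rcases (by omega : v 3 = 0 ∨ v 3 = -1) with h3 | h3 <;>
        rcases (by omega : v 4 = 0 ∨ v 4 = -1) with h4 | h4 <;>
        rcases (by omega : v 6 = 0 ∨ v 6 = 1) with h6 | h6 <;>
        omega
      rcases key with ⟨c0, c1, c2, c3, c4, c5, c6⟩ | ⟨c0, c1, c2, c3, c4, c5, c6⟩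
      · exact hv0 (by funext i; fin_cases i <;> simp [cv5, cv6, c0, c1, c2, c3, c4, c5, c6])
      · refine hvg (by funext i; fin_cases i <;>
          simp [cv5, cv6, g, c0, c1, c2, c3, c4, c5, c6])
  · intro hExt
    obtain ⟨-, hext⟩ := hExt
    set S := {x : Fin 7 → ℝ | ∃ w : Fin 7 → ℤ, (∀ i, 0 ≤ w i) ∧
          A.mulVec w = A.mulVec ![1,0,1,0,0,0,1] ∧ x = fun i => (w i : ℝ)} with hS
    have h1 : (fun i => ((![1,0,0,0,2,0,0] : Fin 7 → ℤ) i : ℝ)) ∈ convexHull ℝ S :=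
      subset_convexHull _ _ ⟨![1,0,0,0,2,0,0], by decide,
        by funext j; fin_cases j <;> decide, rfl⟩
    have h2 : (fun i => ((![0,2,0,0,0,0,1] : Fin 7 → ℤ) i : ℝ)) ∈ convexHull ℝ S :=
      subset_convexHull _ _ ⟨![0,2,0,0,0,0,1], by decide,
        by funext j; fin_cases j <;> decide, rfl⟩
    have h3 : (fun i => ((![0,0,1,2,0,0,0] : Fin 7 → ℤ) i : ℝ)) ∈ convexHull ℝ S :=
      subset_convexHull _ _ ⟨![0,0,1,2,0,0,0], by decide,
        by funext j; fin_cases j <;> decide, rfl⟩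
    have h4 : (fun i => ((![1,0,1,0,0,0,1] : Fin 7 → ℤ) i : ℝ)) ∈ convexHull ℝ S :=
      subset_convexHull _ _ ⟨![1,0,1,0,0,0,1], by decide,
        by funext j; fin_cases j <;> decide, rfl⟩
    have hx1 : (![1/2,1,0,0,1,0,1/2] : Fin 7 → ℝ) ∈ convexHull ℝ S := by
      have h := (convex_convexHull ℝ S) h1 h2 (by norm_num : (0:ℝ) ≤ 1/2)
        (by norm_num : (0:ℝ) ≤ 1/2) (by norm_num)
      convert h using 1
      funext i; fin_cases i <;> norm_num [cv5, cv6]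
    have hx2 : (![1/2,0,1,1,0,0,1/2] : Fin 7 → ℝ) ∈ convexHull ℝ S := by
      have h := (convex_convexHull ℝ S) h3 h4 (by norm_num : (0:ℝ) ≤ 1/2)
        (by norm_num : (0:ℝ) ≤ 1/2) (by norm_num)
      convert h using 1
      funext i; fin_cases i <;> norm_num [cv5, cv6]
    have hmB : (![1/2,1/2,1/2,1/2,1/2,0,1/2] : Fin 7 → ℝ) ∈ segment ℝ gp gm := by
      refine ⟨1/2, 1/2, by norm_num, by norm_num, by norm_num, ?_⟩
      funext i; fin_cases i <;> simp [cv5, cv6, gp, gm]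
    have hmo : (![1/2,1/2,1/2,1/2,1/2,0,1/2] : Fin 7 → ℝ) ∈
        openSegment ℝ (![1/2,1,0,0,1,0,1/2] : Fin 7 → ℝ) (![1/2,0,1,1,0,0,1/2] : Fin 7 → ℝ) := by
      refine ⟨1/2, 1/2, by norm_num, by norm_num, by norm_num, ?_⟩
      funext i; fin_cases i <;> norm_num [cv5, cv6]
    have hc := hext hx1 hx2 hmB hmo
    obtain ⟨a, b, ha, hb, hab, heq⟩ := hc
    have e0 := congrFun heq 0
    have e1 := congrFun heq 1
    simp [gp, gm] at e0 e1
    linarith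
end
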